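/- Let r ∈ L¹(ℝ₊) and let θ : ℝ₊ → ℝ be a continuous function satisfying |θ(x)| ≤ 2∫ₓ^∞ |r(t)||θ(t)| dt for all x ≥ 0. Then θ ≡ 0 on ℝ₊. -/

import Mathlib

open MeasureTheory Set Filter

/-- If `r ∈ L¹(ℝ₊)` and `θ` is a bounded continuous function on `ℝ₊` satisfying
`|θ(x)| ≤ 2∫ₓ^∞ |r(t)||θ(t)| dt` for all `x ≥ 0`, then `θ ≡ 0` on `ℝ₊`. -/
theorem stmt_0 (r θ : ℝ → ℝ)
    (hr : IntegrableOn r (Ici 0))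
    (hθc : ContinuousOn θ (Ici 0))
    (hθb : ∃ C, ∀ x ∈ Ici (0 : ℝ), |θ x| ≤ C)
    (hineq : ∀ x ∈ Ici (0 : ℝ), |θ x| ≤ 2 * ∫ t in Ioi x, |r t| * |θ t|) :
    ∀ x ∈ Ici (0 : ℝ), θ x = 0 := by
  obtain ⟨C₀, hC₀⟩ := hθb
  set C : ℝ := max C₀ 0 with hCdef
  have hC0 : (0:ℝ) ≤ C := le_max_right _ _
  have hCb : ∀ x, 0 ≤ x → |θ x| ≤ C := fun x hx => (hC₀ x hx).trans (le_max_left _ _)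
  -- measurability of θ on Ici 0
  have hθm : AEStronglyMeasurable θ (volume.restrict (Ici (0:ℝ))) :=
    (hθc.aemeasurable measurableSet_Ici).aestronglyMeasurable
  have hrabs : IntegrableOn (fun t => |r t|) (Ici (0:ℝ)) := hr.abs
  -- integrability of |r|*|θ| on Ici 0
  have hg : IntegrableOn (fun t => |r t| * |θ t|) (Ici (0:ℝ)) := by
    have hbound : ∀ᵐ t ∂(volume.restrict (Ici (0:ℝ))), ‖|θ t|‖ ≤ C := by
      refine (ae_restrict_iff' measurableSet_Ici).2 ?_
      filter_upwards with t ht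
      simpa [abs_abs] using hCb t ht
    have hθabs : AEStronglyMeasurable (fun t => |θ t|) (volume.restrict (Ici (0:ℝ))) := by
      simpa [Real.norm_eq_abs] using hθm.norm
    have := Integrable.bdd_mul (c := C) hrabs hθabs hbound
    exact (by simpa [mul_comm] using this :
      Integrable (fun x => |r x| * |θ x|) (volume.restrict (Ici (0:ℝ))))
  have hgsub : ∀ x : ℝ, 0 ≤ x → IntegrableOn (fun t => |r t| * |θ t|) (Ioi x) :=
    fun x hx => hg.mono_set (fun t ht => le_trans hx (le_of_lt ht))
  have hrsub : ∀ x : ℝ, 0 ≤ x → IntegrableOn (fun t => |r t|) (Ioi x) :=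
    fun x hx => hrabs.mono_set (fun t ht => le_trans hx (le_of_lt ht))
  -- generic contraction-to-zero lemma
  have contract : ∀ b : ℝ, 0 ≤ b →
      (∀ D : ℝ, 0 ≤ D → (∀ t, b ≤ t → |θ t| ≤ D) → ∀ y, b ≤ y → |θ y| ≤ D / 2) →
      ∀ y, b ≤ y → θ y = 0 := by
    intro b hb hstep y hy
    have hiter : ∀ n : ℕ, ∀ t, b ≤ t → |θ t| ≤ C / 2 ^ n := by
      intro n
      induction n with
      | zero => intro t ht; simpa using hCb t (hb.trans ht)
      | succ n ih =>
          intro t ht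
          have := hstep (C / 2 ^ n) (by positivity) ih t ht
          calc |θ t| ≤ (C / 2 ^ n) / 2 := this
            _ = C / 2 ^ (n + 1) := by ring
      -- end
    have hle : |θ y| ≤ 0 := by
      have htend : Tendsto (fun n : ℕ => C / 2 ^ n) atTop (nhds 0) := by
        have h := (tendsto_pow_atTop_nhds_zero_of_lt_one
          (by norm_num : (0:ℝ) ≤ 1/2) (by norm_num : (1:ℝ)/2 < 1)).const_mul C
        simpa [div_eq_mul_inv, ← inv_pow, one_div] using h
      exact ge_of_tendsto' htend (fun n => hiter n y hy)
    have := abs_nonneg (θ y)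
    have : |θ y| = 0 := le_antisymm hle this
    exact abs_eq_zero.1 this
  -- the tail: for X with ∫_{Ioi X} |r| ≤ 1/4, θ vanishes on [X, ∞)
  have tailsmall : ∃ X : ℕ, ∫ t in Ioi (X:ℝ), |r t| ≤ 1/4 := by
    have hanti : Antitone (fun n : ℕ => Ioi (n:ℝ)) :=
      fun n m h => Ioi_subset_Ioi (Nat.cast_le.2 h)
    have hint : ⋂ n : ℕ, Ioi ((n:ℝ)) = (∅ : Set ℝ) := by
      ext x
      simp only [mem_iInter, mem_Ioi, mem_empty_iff_false, iff_false, not_forall, not_lt]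
      obtain ⟨n, hn⟩ := exists_nat_gt x
      exact ⟨n, hn.le⟩
    have := tendsto_setIntegral_of_antitone (f := fun t => |r t|) (μ := volume)
      (fun n : ℕ => measurableSet_Ioi) hanti ⟨0, by exact_mod_cast hrsub 0 le_rfl⟩
    rw [hint] at this
    simp only [Measure.restrict_empty, integral_zero_measure] at this
    have h2 := this.eventually (eventually_le_nhds (by norm_num : (0:ℝ) < 1/4))
    obtain ⟨X, hX⟩ := h2.exists
    exact ⟨X, hX⟩
  obtain ⟨X, hX⟩ := tailsmall
  have tailzero : ∀ t, (X:ℝ) ≤ t → θ t = 0 := by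
    refine contract X (Nat.cast_nonneg X) ?_
    intro D hD hDb y hy
    have hy0 : (0:ℝ) ≤ y := (Nat.cast_nonneg X).trans hy
    have h1 : (∫ t in Ioi y, |r t| * |θ t|) ≤ ∫ t in Ioi y, |r t| * D := by
      refine setIntegral_mono_on (hgsub y hy0) ((hrsub y hy0).mul_const D)
        measurableSet_Ioi ?_
      intro t ht
      exact mul_le_mul_of_nonneg_left (hDb t (hy.trans ht.le)) (abs_nonneg _)
    have h2 : (∫ t in Ioi y, |r t| * D) = (∫ t in Ioi y, |r t|) * D := by
      rw [integral_mul_const]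
    have h3 : (∫ t in Ioi y, |r t|) ≤ ∫ t in Ioi (X:ℝ), |r t| := by
      refine setIntegral_mono_set (hrsub X (Nat.cast_nonneg X)) ?_ ?_
      · filter_upwards with t using abs_nonneg _
      · exact HasSubset.Subset.eventuallyLE (Ioi_subset_Ioi hy)
    calc |θ y| ≤ 2 * ∫ t in Ioi y, |r t| * |θ t| := hineq y hy0
      _ ≤ 2 * ((∫ t in Ioi y, |r t|) * D) := by
          rw [← h2]; linarith
      _ ≤ 2 * ((1/4) * D) := by
          have : (∫ t in Ioi y, |r t|) * D ≤ (1/4) * D :=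
            mul_le_mul_of_nonneg_right (h3.trans hX) hD
          linarith
      _ = D / 2 := by ring
  -- the set of points from which θ vanishes onward
  set A : Set ℝ := {x : ℝ | 0 ≤ x ∧ ∀ t, x ≤ t → θ t = 0} with hAdef
  have hXA : (X:ℝ) ∈ A := ⟨Nat.cast_nonneg X, tailzero⟩
  have hbdd : BddBelow A := ⟨0, fun x hx => hx.1⟩
  set a : ℝ := sInf A with hadef
  have ha0 : 0 ≤ a := le_csInf ⟨X, hXA⟩ (fun x hx => hx.1)
  have hagt : ∀ t, a < t → θ t = 0 := by
    intro t ht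
    rw [hadef] at ht
    obtain ⟨x, hxA, hxt⟩ := exists_lt_of_csInf_lt (s := A) ⟨(X:ℝ), hXA⟩ ht
    exact hxA.2 t hxt.le
  have hazero : ∀ t, a ≤ t → θ t = 0 := by
    intro t ht
    rcases eq_or_lt_of_le ht with h | h
    · -- t = a: use the inequality, integrand vanishes on Ioi a
      have ht0 : (0:ℝ) ≤ t := ha0.trans ht
      have hz : (∫ s in Ioi t, |r s| * |θ s|) = 0 := by
        refine setIntegral_eq_zero_of_forall_eq_zero ?_
        intro s hs
        exact by rw [hagt s (lt_of_le_of_lt h.le hs), abs_zero, mul_zero]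
      have := hineq t ht0
      rw [hz] at this
      have h0 := abs_nonneg (θ t)
      have : |θ t| = 0 := le_antisymm (by linarith) h0
      exact abs_eq_zero.1 this
    · exact hagt t h
  have haA : a ∈ A := ⟨ha0, hazero⟩
  -- show a = 0
  have ha_eq : a = 0 := by
    by_contra hne
    have hapos : 0 < a := lt_of_le_of_ne ha0 (Ne.symm hne)
    -- find b < a with b ≥ 0 and ∫_{Ioc b a} |r| ≤ 1/4
    have hanti : Antitone (fun n : ℕ => Ioc (max 0 (a - 1/(n+1))) a) := by
      intro n m h
      apply Ioc_subset_Ioc_left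
      apply max_le_max le_rfl
      have hnm : ((n:ℝ)+1) ≤ (m:ℝ)+1 := by exact_mod_cast Nat.succ_le_succ h
      have : (1:ℝ)/((m:ℝ)+1) ≤ 1/((n:ℝ)+1) := one_div_le_one_div_of_le (by positivity) hnm
      linarith
    have hint : ⋂ n : ℕ, Ioc (max 0 (a - 1/(n+1))) a = {a} := by
      ext x
      simp only [mem_iInter, mem_Ioc, mem_singleton_iff]
      constructor
      · intro h
        have hxa : x ≤ a := (h 0).2
        refine le_antisymm hxa ?_
        by_contra hlt
        push_neg at hlt
        obtain ⟨n, hn⟩ := exists_nat_one_div_lt (by linarith : (0:ℝ) < a - x)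
        have h1 := (h n).1
        have h2 : a - 1/((n:ℝ)+1) ≤ max 0 (a - 1/((n:ℝ)+1)) := le_max_right _ _
        linarith
      · rintro rfl
        intro n
        refine ⟨max_lt hapos ?_, le_rfl⟩
        have : (0:ℝ) < 1/((n:ℝ)+1) := by positivity
        linarith
    have hsub0 : ∀ n : ℕ, Ioc (max 0 (a - 1/((n:ℝ)+1))) a ⊆ Ici (0:ℝ) :=
      fun n t ht => le_of_lt (lt_of_le_of_lt (le_max_left _ _) ht.1)
    have htend := tendsto_setIntegral_of_antitone (f := fun t => |r t|) (μ := volume)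
      (fun n : ℕ => measurableSet_Ioc) hanti
      ⟨0, hrabs.mono_set (hsub0 0)⟩
    rw [hint] at htend
    have hsing : (∫ t in ({a} : Set ℝ), |r t|) = 0 := by
      have hz : volume.restrict ({a} : Set ℝ) = 0 := by
        rw [Measure.restrict_eq_zero]
        exact measure_singleton a
      rw [hz, integral_zero_measure]
    rw [hsing] at htend
    have h2 := htend.eventually (eventually_le_nhds (by norm_num : (0:ℝ) < 1/4))
    obtain ⟨n, hsmall⟩ := h2.exists
    set b : ℝ := max 0 (a - 1/((n:ℝ)+1)) with hbdef
    have hb0 : 0 ≤ b := le_max_left _ _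
    have hba : b < a := by
      refine max_lt hapos ?_
      have : (0:ℝ) < 1/((n:ℝ)+1) := by positivity
      linarith
    -- θ vanishes on [b, ∞)
    have hbzero : ∀ t, b ≤ t → θ t = 0 := by
      refine contract b hb0 ?_
      intro D hD hDb y hy
      have hy0 : (0:ℝ) ≤ y := hb0.trans hy
      rcases le_or_gt y a with hya | hya
      · -- split Ioi y = Ioc y a ∪ Ioi a
        have hsplit : (∫ t in Ioi y, |r t| * |θ t|)
            = (∫ t in Ioc y a, |r t| * |θ t|) + ∫ t in Ioi a, |r t| * |θ t| := by
          rw [← setIntegral_union Ioc_disjoint_Ioi_same measurableSet_Ioi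
            ((hgsub y hy0).mono_set Ioc_subset_Ioi_self) (hgsub a ha0),
            Ioc_union_Ioi_eq_Ioi hya]
        have hz : (∫ t in Ioi a, |r t| * |θ t|) = 0 := by
          refine setIntegral_eq_zero_of_forall_eq_zero ?_
          intro s hs
          rw [hazero s hs.le, abs_zero, mul_zero]
        have h1 : (∫ t in Ioc y a, |r t| * |θ t|) ≤ ∫ t in Ioc y a, |r t| * D := by
          refine setIntegral_mono_on ((hgsub y hy0).mono_set Ioc_subset_Ioi_self)
            (((hrsub y hy0).mono_set Ioc_subset_Ioi_self).mul_const D)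
            measurableSet_Ioc ?_
          intro t ht
          exact mul_le_mul_of_nonneg_left (hDb t (hy.trans ht.1.le)) (abs_nonneg _)
        have h2' : (∫ t in Ioc y a, |r t| * D) = (∫ t in Ioc y a, |r t|) * D := by
          rw [integral_mul_const]
        have h3' : (∫ t in Ioc y a, |r t|) ≤ ∫ t in Ioc b a, |r t| := by
          refine setIntegral_mono_set
            ((hrsub b hb0).mono_set Ioc_subset_Ioi_self) ?_ ?_
          · filter_upwards with t using abs_nonneg _
          · exact HasSubset.Subset.eventuallyLE (Ioc_subset_Ioc_left hy)
        calc |θ y| ≤ 2 * ∫ t in Ioi y, |r t| * |θ t| := hineq y hy0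
          _ = 2 * ∫ t in Ioc y a, |r t| * |θ t| := by rw [hsplit, hz, add_zero]
          _ ≤ 2 * ((∫ t in Ioc y a, |r t|) * D) := by rw [← h2']; linarith
          _ ≤ 2 * ((1/4) * D) := by
              have : (∫ t in Ioc y a, |r t|) * D ≤ (1/4) * D :=
                mul_le_mul_of_nonneg_right (h3'.trans hsmall) hD
              linarith
          _ = D / 2 := by ring
      · rw [hazero y hya.le, abs_zero]
        linarith
    have : a ≤ b := csInf_le hbdd ⟨hb0, hbzero⟩
    linarith
  intro x hx
  exact hazero x (ha_eq ▸ hx)
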